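/- Let P_real = P1 be probability measures on R^d, and suppose the discriminator class contains a function D* : R^d → [0,1] with D*(x) = 1 for all x in the support of P_real and D*(x) = 0 on a measurable set S with P2(S) ≥ 1 − q'. If G induces P_G = (1−q)P1 + qP2 with q ∈ (0,1), then E_{P1}[D*] − E_{P2}[D*] ≥ 1 − q', and consequently no discriminator D forms an ε-approximate pure equilibrium with G for any ε < (1/2)·q·(1 − q'). -/

import Mathlib

open MeasureTheory

/-- The (topological) support of a measure: points all of whose neighborhoods have
positive measure. -/
def measureSupport {d : ℕ} (μ : Measure (EuclideanSpace ℝ (Fin d))) :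
    Set (EuclideanSpace ℝ (Fin d)) :=
  {x | ∀ U ∈ nhds x, μ U ≠ 0}

lemma compl_support_null {d : ℕ} (μ : Measure (EuclideanSpace ℝ (Fin d))) :
    μ (measureSupport μ)ᶜ = 0 := by
  apply measure_null_of_locally_null
  intro x hx
  simp only [measureSupport, Set.mem_compl_iff, Set.mem_setOf_eq, not_forall] at hx
  obtain ⟨U, hU, hU0⟩ := hx
  push_neg at hU0
  refine ⟨U ∩ (measureSupport μ)ᶜ, ?_, measure_mono_null Set.inter_subset_left hU0⟩
  exact Filter.inter_mem (nhdsWithin_le_nhds hU) self_mem_nhdsWithin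

/-- with `P_real = P1` and an optimal discriminator `D*` equal to 1 on the
support of `P_real` and 0 on a set `S` with `P2(S) ≥ 1 - q'`, we have
`E_{P1}[D*] - E_{P2}[D*] ≥ 1 - q'`, and no discriminator in the class forms an
ε-approximate pure equilibrium with the mixture generator for any `ε < (1/2) q (1-q')`. -/
theorem no_equilibrium_for_backdoored_generator {d : ℕ}
    (Preal P1 P2 : Measure (EuclideanSpace ℝ (Fin d)))
    [IsProbabilityMeasure Preal] [IsProbabilityMeasure P1] [IsProbabilityMeasure P2]
    (hPP : Preal = P1)
    (q q' : ℝ) (hq : q ∈ Set.Ioo (0:ℝ) 1) (hq' : q' ∈ Set.Icc (0:ℝ) 1)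
    (S : Set (EuclideanSpace ℝ (Fin d))) (hSmeas : MeasurableSet S)
    (hPS : ENNReal.ofReal (1 - q') ≤ P2 S)
    (Dclass : Set (EuclideanSpace ℝ (Fin d) → ℝ))
    (hDclass : ∀ D ∈ Dclass,
      Measurable D ∧ (∀ x, D x ∈ Set.Icc (0:ℝ) 1) ∧ LipschitzWith 1 D)
    (Gmeasures : Set (Measure (EuclideanSpace ℝ (Fin d))))
    (hGmix : (ENNReal.ofReal (1 - q) • P1 + ENNReal.ofReal q • P2) ∈ Gmeasures)
    (hGstar : P1 ∈ Gmeasures)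
    (Dstar : EuclideanSpace ℝ (Fin d) → ℝ)
    (hDstarMem : Dstar ∈ Dclass)
    (hDstarOne : ∀ x ∈ measureSupport Preal, Dstar x = 1)
    (hDstarZero : ∀ x ∈ S, Dstar x = 0) :
    ((∫ x, Dstar x ∂P1) - (∫ x, Dstar x ∂P2) ≥ 1 - q') ∧
    (∀ D ∈ Dclass, ∀ ε : ℝ, ε < (1 / 2) * q * (1 - q') →
      ¬ ∃ V : ℝ,
        (∀ D' ∈ Dclass,
          (∫ x, D' x ∂Preal)
            - (∫ x, D' x ∂(ENNReal.ofReal (1 - q) • P1 + ENNReal.ofReal q • P2)) ≤ V + ε) ∧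
        (∀ μ ∈ Gmeasures,
          (∫ x, D x ∂Preal) - (∫ x, D x ∂μ) ≥ V - ε)) := by
  obtain ⟨hDm, hD01, _⟩ := hDclass Dstar hDstarMem
  obtain ⟨hq0, hq1⟩ := hq
  obtain ⟨hq'0, hq'1⟩ := hq'
  -- integrability
  have hint : ∀ (μ : Measure (EuclideanSpace ℝ (Fin d))) [IsProbabilityMeasure μ],
      Integrable Dstar μ := by
    intro μ _
    refine (integrable_const (1:ℝ)).mono' hDm.aestronglyMeasurable ?_
    filter_upwards with x
    rw [Real.norm_eq_abs, abs_le]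
    exact ⟨by linarith [(hD01 x).1], (hD01 x).2⟩
  -- E_{P1}[Dstar] = 1
  have h1 : (∫ x, Dstar x ∂P1) = 1 := by
    have hae : Dstar =ᵐ[P1] (fun _ => (1:ℝ)) := by
      rw [Filter.EventuallyEq, ae_iff]
      apply measure_mono_null _ (compl_support_null P1)
      intro x hx
      simp only [Set.mem_compl_iff, measureSupport, Set.mem_setOf_eq]
      intro hxs
      exact hx (hDstarOne x (by rwa [hPP]))
    rw [integral_congr_ae hae]
    simp
  -- E_{P2}[Dstar] ≤ q'
  have h2 : (∫ x, Dstar x ∂P2) ≤ q' := by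
    have hle : ∀ x, Dstar x ≤ Sᶜ.indicator (fun _ => (1:ℝ)) x := by
      intro x
      by_cases hx : x ∈ S
      · simp [hDstarZero x hx, hx, Set.indicator_apply]
      · simp [Set.indicator_apply, hx, (hD01 x).2]
    have := integral_mono (hint P2)
      ((integrable_const (1:ℝ)).indicator hSmeas.compl) hle
    rw [integral_indicator_const _ hSmeas.compl] at this
    have hS2 : (P2 Sᶜ).toReal ≤ q' := by
      have h1S : P2 Sᶜ ≤ ENNReal.ofReal q' := by
        rw [measure_compl hSmeas (measure_ne_top _ _), measure_univ]
        refine tsub_le_iff_right.2 ?_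
        calc (1:ENNReal) = ENNReal.ofReal (q' + (1 - q')) := by
              rw [show q' + (1-q') = 1 by ring]; simp
          _ ≤ ENNReal.ofReal q' + ENNReal.ofReal (1 - q') := ENNReal.ofReal_add_le
          _ ≤ ENNReal.ofReal q' + P2 S := by gcongr
      calc (P2 Sᶜ).toReal ≤ (ENNReal.ofReal q').toReal := ENNReal.toReal_mono (by simp) h1S
        _ = q' := ENNReal.toReal_ofReal hq'0
    rw [smul_eq_mul, mul_one] at this
    linarith [show P2.real Sᶜ = (P2 Sᶜ).toReal from rfl]
  refine ⟨by rw [h1]; linarith, ?_⟩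
  rintro D hD ε hε ⟨V, hV1, hV2⟩
  have hVle : V - ε ≤ 0 := by
    have := hV2 P1 hGstar
    rw [hPP, sub_self] at this
    linarith
  have hmix : (∫ x, Dstar x ∂(ENNReal.ofReal (1 - q) • P1 + ENNReal.ofReal q • P2))
      = (1 - q) * (∫ x, Dstar x ∂P1) + q * (∫ x, Dstar x ∂P2) := by
    rw [integral_add_measure ((hint P1).smul_measure (by simp))
        ((hint P2).smul_measure (by simp)),
      integral_smul_measure, integral_smul_measure,
      ENNReal.toReal_ofReal (by linarith), ENNReal.toReal_ofReal hq0.le]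
    simp [smul_eq_mul]
  have hgain := hV1 Dstar hDstarMem
  rw [hPP, hmix, h1] at hgain
  -- 1 - ((1-q)*1 + q*∫P2) = q*(1 - ∫P2) ≥ q*(1-q')
  have : q * (1 - q') ≤ V + ε := by nlinarith
  nlinarith
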